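/- Let U = ∂_{ρ₁,e₁} and V = ∂_{ρ₂,e₂} with c₂ = ⟨ρ₂,e₁⟩ ≥ 1, d₁ = ⟨ρ₁,e₂⟩ ≥ 0 and δ = d₁ + 1. Then ad_U^δ(V) = −c₂ · δ! · ∂_{ρ₁, e₂ + δ e₁}, and ad_U^m(V) = 0 for all m ≥ δ + 1. -/

import Mathlib

/-- The homogeneous derivation `∂_{ρ,e}` of the (semi)group algebra, defined on the
monomial basis by `∂_{ρ,e}(χ^m) = ⟨ρ,m⟩ χ^{m+e}`. -/
noncomputable def homDer (K : Type*) [Field K] {M : Type*} [AddCommGroup M]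
    (ρ : M →+ ℤ) (e : M) :
    AddMonoidAlgebra K M →ₗ[K] AddMonoidAlgebra K M :=
  (Finsupp.lsum K fun m =>
    LinearMap.toSpanSingleton K (AddMonoidAlgebra K M)
      ((ρ m : ℤ) • AddMonoidAlgebra.single (m + e) (1 : K))) ∘ₗ
    (AddMonoidAlgebra.coeffLinearEquiv K).toLinearMap

section aux
variable {K : Type*} [Field K] {M : Type*} [AddCommGroup M]


lemma homDer_single (ρ : M →+ ℤ) (e m : M) (k : K) :
    homDer K ρ e (AddMonoidAlgebra.single m k)
      = ((ρ m : ℤ) : K) • AddMonoidAlgebra.single (m + e) k := by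
  rw [homDer]
  simp only [LinearMap.comp_apply, LinearEquiv.coe_coe, AddMonoidAlgebra.coeffLinearEquiv_apply,
    AddMonoidAlgebra.coeff_single]
  erw [Finsupp.lsum_single, LinearMap.toSpanSingleton_apply]
  rw [← Int.cast_smul_eq_zsmul K, smul_comm]
  congr 1
  show k • AddMonoidAlgebra.single (m + e) (1:K) = AddMonoidAlgebra.single (m+e) k
  erw [AddMonoidAlgebra.smul_single]
  rw [smul_eq_mul, mul_one]

lemma bracket (ρ ρ' : M →+ ℤ) (e e' : M) :
    homDer K ρ e ∘ₗ homDer K ρ' e' - homDer K ρ' e' ∘ₗ homDer K ρ e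
      = homDer K (ρ e' • ρ' - ρ' e • ρ) (e + e') := by
  refine AddMonoidAlgebra.lhom_ext' fun m => LinearMap.ext fun k => ?_
  show homDer K ρ e (homDer K ρ' e' (AddMonoidAlgebra.single m k))
      - homDer K ρ' e' (homDer K ρ e (AddMonoidAlgebra.single m k))
      = homDer K _ (e + e') (AddMonoidAlgebra.single m k)
  rw [homDer_single, homDer_single, homDer_single, map_smul, map_smul,
    homDer_single, homDer_single, smul_smul, smul_smul]
  rw [show m + e' + e = m + (e + e') by abel, show m + e + e' = m + (e + e') by abel,
    ← sub_smul]
  congr 1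
  simp only [AddMonoidHom.sub_apply, AddMonoidHom.smul_apply, smul_eq_mul, map_add]
  push_cast
  ring

lemma homDer_zero (e : M) : homDer K (0 : M →+ ℤ) e = 0 := by
  refine AddMonoidAlgebra.lhom_ext' fun m => LinearMap.ext fun k => ?_
  show homDer K (0 : M →+ ℤ) e (AddMonoidAlgebra.single m k) = _
  rw [homDer_single]
  simp

lemma homDer_zsmul (n : ℤ) (ρ : M →+ ℤ) (e : M) :
    homDer K (n • ρ) e = ((n : K)) • homDer K ρ e := by
  refine AddMonoidAlgebra.lhom_ext' fun m => LinearMap.ext fun k => ?_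
  show homDer K (n • ρ) e (AddMonoidAlgebra.single m k)
      = (n:K) • homDer K ρ e (AddMonoidAlgebra.single m k)
  rw [homDer_single, homDer_single, smul_smul]
  congr 1
  rw [AddMonoidHom.smul_apply, smul_eq_mul]
  push_cast
  ring

end aux

/-- for `U = ∂_{ρ₁,e₁}`, `V = ∂_{ρ₂,e₂}` with `⟨ρ₁,e₁⟩ = ⟨ρ₂,e₂⟩ = −1`,
`c₂ = ⟨ρ₂,e₁⟩ ≥ 1`, `d₁ = ⟨ρ₁,e₂⟩ = d ≥ 0` and `δ = d₁ + 1`: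
`ad_U^δ(V) = −c₂ · δ! · ∂_{ρ₁, e₂ + δ e₁}` and `ad_U^m(V) = 0` for all `m ≥ δ + 1`. -/
theorem stmt7 {K : Type*} [Field K] [CharZero K] {M : Type*} [AddCommGroup M]
    (ρ₁ ρ₂ : M →+ ℤ) (e₁ e₂ : M)
    (h₁ : ρ₁ e₁ = -1) (h₂ : ρ₂ e₂ = -1)
    (hc : 1 ≤ ρ₂ e₁)
    (d : ℕ) (hd : ρ₁ e₂ = (d : ℤ)) :
    ((fun W => homDer K ρ₁ e₁ ∘ₗ W - W ∘ₗ homDer K ρ₁ e₁)^[d + 1] (homDer K ρ₂ e₂)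
        = ((-(ρ₂ e₁) * ((d + 1).factorial : ℤ) : ℤ) : K) •
            homDer K ρ₁ (e₂ + (d + 1) • e₁))
    ∧ ∀ m : ℕ, d + 2 ≤ m →
        (fun W => homDer K ρ₁ e₁ ∘ₗ W - W ∘ₗ homDer K ρ₁ e₁)^[m] (homDer K ρ₂ e₂) = 0 := by

  set ad : (AddMonoidAlgebra K M →ₗ[K] AddMonoidAlgebra K M) →
      (AddMonoidAlgebra K M →ₗ[K] AddMonoidAlgebra K M) :=
    fun W => homDer K ρ₁ e₁ ∘ₗ W - W ∘ₗ homDer K ρ₁ e₁ with had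
  have hE : ∀ k : ℕ, ρ₁ (e₂ + k • e₁) = (d : ℤ) - k := by
    intro k
    rw [map_add, map_nsmul, hd, h₁]
    push_cast
    ring
  have key : ∀ k : ℕ, k ≤ d + 1 →
      ad^[k] (homDer K ρ₂ e₂)
        = homDer K ((d.descFactorial k : ℤ) • ρ₂
            + (-(ρ₂ e₁) * (k : ℤ) * (d.descFactorial (k-1) : ℤ)) • ρ₁) (e₂ + k • e₁) := by
    intro k hk
    induction k with
    | zero => simp
    | succ k ih =>
      have hkd : k ≤ d := by omega
      rw [Function.iterate_succ_apply', ih (by omega)]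
      rw [had]
      simp only []
      rw [bracket]
      rw [show e₁ + (e₂ + k • e₁) = e₂ + (k+1) • e₁ by rw [succ_nsmul]; abel]
      congr 1
      rw [hE k]
      ext x
      simp only [AddMonoidHom.sub_apply, AddMonoidHom.add_apply, AddMonoidHom.smul_apply,
        smul_eq_mul, h₁]
      rcases k with _ | k'
      · simp [Nat.descFactorial]
        push_cast
        ring
      · have hk1 : k' ≤ d := by omega
        have hk2 : k' + 1 ≤ d := by omega
        have hd1 : (d.descFactorial (k'+1) : ℤ) = ((d:ℤ) - k') * d.descFactorial k' := by
          rw [Nat.descFactorial_succ]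
          push_cast [Nat.cast_sub hk1]
          ring
        have hd2 : (d.descFactorial (k'+2) : ℤ) = ((d:ℤ) - (k'+1)) * d.descFactorial (k'+1) := by
          rw [Nat.descFactorial_succ]
          push_cast [Nat.cast_sub hk2]
          ring
        simp only [Nat.add_sub_cancel]
        push_cast [hd2, hd1]
        ring
  have hmain : ad^[d+1] (homDer K ρ₂ e₂)
      = ((-(ρ₂ e₁) * ((d + 1).factorial : ℤ) : ℤ) : K) • homDer K ρ₁ (e₂ + (d + 1) • e₁) := by
    rw [key (d+1) le_rfl]
    have h0 : (d.descFactorial (d+1) : ℤ) = 0 := by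
      simp [Nat.descFactorial_eq_zero_iff_lt]
    have hq : (-(ρ₂ e₁) * ((d:ℤ)+1) * (d.descFactorial ((d+1)-1) : ℤ))
        = -(ρ₂ e₁) * ((d + 1).factorial : ℤ) := by
      simp only [Nat.add_sub_cancel, Nat.descFactorial_self, Nat.factorial_succ]
      push_cast
      ring
    rw [h0, zero_smul, zero_add, homDer_zsmul]
    congr 1
    rw [Nat.add_sub_cancel, Nat.descFactorial_self, Nat.factorial_succ]
    push_cast
    ring
  refine ⟨hmain, ?_⟩
  have hz : ad^[d+2] (homDer K ρ₂ e₂) = 0 := by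
    rw [show d + 2 = (d+1) + 1 by ring, Function.iterate_succ_apply', hmain]
    have hsm : ∀ (c : K) (W : AddMonoidAlgebra K M →ₗ[K] AddMonoidAlgebra K M),
        ad (c • W) = c • ad W := by
      intro c W
      ext x
      simp [had, smul_sub]
    rw [hsm, had]
    simp only []
    rw [bracket]
    rw [hE (d+1)]
    have : ((d:ℤ) - (d+1:ℕ)) • ρ₁ - ρ₁ e₁ • ρ₁ = 0 := by
      rw [h₁]
      push_cast
      rw [show (d:ℤ) - ((d:ℤ)+1) = -1 by ring]
      abel
    rw [this, homDer_zero, smul_zero]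
  intro m hm
  obtain ⟨j, rfl⟩ : ∃ j, m = (d + 2) + j := ⟨m - (d+2), by omega⟩
  induction j with
  | zero => exact hz
  | succ j ihj =>
    rw [show d + 2 + (j+1) = (d + 2 + j) + 1 by ring, Function.iterate_succ_apply',
      ihj (by omega), had]
    simp
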